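/- One has Δ_n^p ∘ Δ_{n−1}^p ∘ ⋯ ∘ Δ_1^p (θ_1^p · θ_2^p ⋯ θ_n^p) = (p!)^{2n} · 1 in Λ_n(p). (Equivalently, the integral on the para-algebra, defined as (1/(p!)^n)·Δ_n^p ∘ ⋯ ∘ Δ_1^p, takes the value (p!)^n on θ_1^p θ_2^p ⋯ θ_n^p.) -/

import Mathlib

noncomputable section

open scoped BigOperators

/-- Commutator `[x, y] = x*y - y*x` in an associative ring. -/
def brk {A : Type*} [Ring A] (x y : A) : A := x * y - y * x

/-- Defining relations of the `ℤ₂^p`-graded commutative algebra `Λ_n(p)`: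
`θ_i^{(α)}·θ_j^{(β)} = (−1)^{δ_{αβ}}·θ_j^{(β)}·θ_i^{(α)}`. -/
inductive LamRel (n p : ℕ) : FreeAlgebra ℂ (Fin n × Fin p) → FreeAlgebra ℂ (Fin n × Fin p) → Prop
  | comm : ∀ (i j : Fin n) (α β : Fin p),
      LamRel n p (FreeAlgebra.ι ℂ (i, α) * FreeAlgebra.ι ℂ (j, β))
        ((if α = β then (-1 : ℂ) else 1) • (FreeAlgebra.ι ℂ (j, β) * FreeAlgebra.ι ℂ (i, α)))

/-- The algebra `Λ_n(p)`. -/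
abbrev Lam (n p : ℕ) : Type := RingQuot (LamRel n p)

/-- The generators `θ_i^{(α)}` of `Λ_n(p)`. -/
def θc (n p : ℕ) (i : Fin n) (α : Fin p) : Lam n p :=
  RingQuot.mkAlgHom ℂ (LamRel n p) (FreeAlgebra.ι ℂ (i, α))

/-- `θ_i = Σ_{α=1}^p θ_i^{(α)}`. -/
def θv (n p : ℕ) (i : Fin n) : Lam n p := ∑ α : Fin p, θc n p i α

/-- The inhomogeneous subalgebra `IΛ_n(p)` generated by `θ_1, …, θ_n`. -/
def ILam (n p : ℕ) : Subalgebra ℂ (Lam n p) :=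
  Algebra.adjoin ℂ (Set.range (θv n p))

/-- `Δ_i = Σ_{α=1}^p ∂_i^{(α)}`. -/
def Δop (n p : ℕ) (Dp : Fin n → Fin p → Module.End ℂ (Lam n p)) (i : Fin n) :
    Module.End ℂ (Lam n p) := ∑ α : Fin p, Dp i α

section SumPow
variable {A : Type*} [Ring A] {ι : Type*} (x : ι → A)

lemma aux_commute_prod (hc : ∀ a b, Commute (x a) (x b)) (a : ι) (l : List ι) :
    Commute (x a) ((l.map x).prod) :=
  Commute.list_prod_right _ _ (by
    intro y hy
    obtain ⟨b, -, rfl⟩ := List.mem_map.1 hy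
    exact hc a b)

lemma aux_prod_mul (hc : ∀ a b, Commute (x a) (x b)) (hsq : ∀ a, x a * x a = 0) :
    ∀ (l : List ι) (b : ι), b ∈ l → (l.map x).prod * x b = 0 := by
  intro l
  induction l with
  | nil => simp
  | cons c l ih =>
    intro b hb
    simp only [List.map_cons, List.prod_cons, mul_assoc]
    rcases List.mem_cons.1 hb with rfl | hb
    · rw [((aux_commute_prod x hc b l).symm).eq, ← mul_assoc, hsq, zero_mul]
    · rw [ih b hb, mul_zero]

lemma aux_sum_pow (hc : ∀ a b, Commute (x a) (x b)) (hsq : ∀ a, x a * x a = 0) :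
    ∀ l : List ι, ((l.map x).sum) ^ l.length = l.length.factorial • (l.map x).prod := by
  intro l
  induction l with
  | nil => simp
  | cons a l ih =>
    have hcom : Commute (x a) ((l.map x).sum) :=
      Commute.list_sum_right _ _ (by
        intro y hy
        obtain ⟨b, -, rfl⟩ := List.mem_map.1 hy
        exact hc a b)
    set S := (l.map x).sum with hS
    set P := (l.map x).prod with hP
    set L := l.length with hL
    have hPS : P * S = 0 := by
      rw [hS, ← List.sum_map_mul_left]
      refine List.sum_eq_zero ?_
      intro y hy
      simp only [List.map_map, List.mem_map] at hy
      obtain ⟨b, hb, rfl⟩ := hy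
      exact aux_prod_mul x hc hsq l b hb
    have hSL1 : S ^ (L + 1) = 0 := by
      rw [pow_succ, ih, smul_mul_assoc, hPS, smul_zero]
    have expand := hcom.add_pow (L + 1)
    rw [Finset.sum_range_succ', Finset.sum_range_succ'] at expand
    have hzero : ∀ m ∈ Finset.range L,
        x a ^ (m + 1 + 1) * S ^ (L + 1 - (m + 1 + 1)) * ((L + 1).choose (m + 1 + 1) : A) = 0 := by
      intro m _
      have : x a ^ (m + 1 + 1) = 0 := by
        rw [pow_succ, pow_succ, mul_assoc, hsq, mul_zero]
      rw [this, zero_mul, zero_mul]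
    rw [Finset.sum_eq_zero hzero, zero_add] at expand
    simp only [zero_add, pow_one, pow_zero, one_mul, Nat.choose_one_right,
      Nat.choose_zero_right, Nat.cast_one, mul_one, Nat.sub_zero, Nat.add_sub_cancel] at expand
    simp only [List.map_cons, List.prod_cons, List.sum_cons, List.length_cons]
    rw [← hS, ← hL, expand, hSL1, add_zero, ih, ← hP, mul_smul_comm, smul_mul_assoc]
    rw [(Nat.cast_commute (L + 1) (x a * P)).symm.eq, ← nsmul_eq_mul, smul_smul,
      Nat.factorial_succ, Nat.mul_comm]

end SumPow

noncomputable section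

open scoped BigOperators


lemma half_smul {M : Type*} [AddCommGroup M] [Module ℂ M] (x : M) (h : x = -x) : x = 0 := by
  have h2 : (2 : ℂ) • x = 0 := by
    rw [two_smul]
    nth_rewrite 1 [h]
    rw [neg_add_cancel]
  calc x = (2 : ℂ)⁻¹ • ((2 : ℂ) • x) := by
        rw [smul_smul, inv_mul_cancel₀ two_ne_zero, one_smul]
    _ = 0 := by rw [h2, smul_zero]

lemma θc_rel (n p : ℕ) (i j : Fin n) (α β : Fin p) :
    θc n p i α * θc n p j β
      = (if α = β then (-1 : ℂ) else 1) • (θc n p j β * θc n p i α) := by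
  unfold θc
  simp only [← map_mul, ← map_smul]
  exact RingQuot.mkAlgHom_rel ℂ (LamRel.comm i j α β)

lemma θc_comm (n p : ℕ) (i : Fin n) (a b : Fin p) :
    Commute (θc n p i a) (θc n p i b) := by
  rcases eq_or_ne a b with rfl | h
  · exact Commute.refl _
  · have := θc_rel n p i i a b
    rw [if_neg h, one_smul] at this
    exact this

lemma θc_sq (n p : ℕ) (i : Fin n) (a : Fin p) : θc n p i a * θc n p i a = 0 := by
  refine half_smul _ ?_
  have h := θc_rel n p i i a a
  rw [if_pos rfl] at h
  have h2 : (-1 : ℂ) • (θc n p i a * θc n p i a) = -(θc n p i a * θc n p i a) :=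
    neg_one_smul ℂ (θc n p i a * θc n p i a)
  exact h.trans h2

section WithD
variable {n p : ℕ} {Dp : Fin n → Fin p → Module.End ℂ (Lam n p)}

lemma D_mul
    (hD2 : ∀ (i j : Fin n) (α β : Fin p),
      Dp i α * LinearMap.mulLeft ℂ (θc n p j β)
          - (if α = β then (-1 : ℂ) else 1) • (LinearMap.mulLeft ℂ (θc n p j β) * Dp i α)
        = if i = j ∧ α = β then 1 else 0)
    (i j : Fin n) (α β : Fin p) (w : Lam n p) :
    Dp i α (θc n p j β * w)
      = (if α = β then (-1 : ℂ) else 1) • (θc n p j β * Dp i α w)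
        + (if i = j ∧ α = β then w else 0) := by
  have h := congrFun (congrArg (DFunLike.coe) (hD2 i j α β)) w
  simp only [LinearMap.sub_apply, LinearMap.smul_apply, Module.End.mul_apply,
    LinearMap.mulLeft_apply] at h
  rw [sub_eq_iff_eq_add] at h
  rw [h, add_comm]
  congr 1
  split <;> simp

lemma kill_sorted
    (hD2 : ∀ (i j : Fin n) (α β : Fin p),
      Dp i α * LinearMap.mulLeft ℂ (θc n p j β)
          - (if α = β then (-1 : ℂ) else 1) • (LinearMap.mulLeft ℂ (θc n p j β) * Dp i α)
        = if i = j ∧ α = β then 1 else 0)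
    (i : Fin n) (α : Fin p) (j : Fin n) (hji : j ≠ i) :
    ∀ (l : List (Fin p)) (z : Lam n p), Dp i α z = 0 →
      Dp i α ((l.map (θc n p j)).prod * z) = 0 := by
  intro l
  induction l with
  | nil => intro z hz; simpa using hz
  | cons b l ih =>
    intro z hz
    rw [List.map_cons, List.prod_cons, mul_assoc, D_mul hD2, ih z hz, mul_zero, smul_zero,
      zero_add, if_neg (show ¬(i = j ∧ α = b) from fun hc => hji hc.1.symm)]

lemma kill_Theta
    (hD1 : ∀ (i : Fin n) (α : Fin p), Dp i α (1 : Lam n p) = 0)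
    (hD2 : ∀ (i j : Fin n) (α β : Fin p),
      Dp i α * LinearMap.mulLeft ℂ (θc n p j β)
          - (if α = β then (-1 : ℂ) else 1) • (LinearMap.mulLeft ℂ (θc n p j β) * Dp i α)
        = if i = j ∧ α = β then 1 else 0) :
    ∀ (J : List (Fin n)) (i : Fin n) (α : Fin p), i ∉ J →
      Dp i α ((J.map (fun j => ((List.finRange p).map (θc n p j)).prod)).prod) = 0 := by
  intro J
  induction J with
  | nil => intro i α _; simpa using hD1 i α
  | cons j J ih =>
    intro i α hi
    rw [List.map_cons, List.prod_cons]
    exact kill_sorted hD2 i α j (fun h => hi (h ▸ List.mem_cons_self (a := j) (l := J))) _ _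
      (ih i α (fun h => hi (List.mem_cons_of_mem j h)))

lemma commF
    (hD2 : ∀ (i j : Fin n) (α β : Fin p),
      Dp i α * LinearMap.mulLeft ℂ (θc n p j β)
          - (if α = β then (-1 : ℂ) else 1) • (LinearMap.mulLeft ℂ (θc n p j β) * Dp i α)
        = if i = j ∧ α = β then 1 else 0)
    (i : Fin n) (a : Fin p) :
    ∀ (l : List (Fin p)), a ∉ l → ∀ w : Lam n p,
      ((l.map (Dp i)).prod) (θc n p i a * w) = θc n p i a * ((l.map (Dp i)).prod) w := by
  intro l
  induction l with
  | nil => intro _ w; simp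
  | cons b l ih =>
    intro ha w
    have hba : b ≠ a := fun h => ha (h ▸ List.mem_cons_self (a := b) (l := l))
    rw [List.map_cons, List.prod_cons, Module.End.mul_apply, Module.End.mul_apply,
      ih (fun h => ha (List.mem_cons_of_mem b h)) w, D_mul hD2,
      if_neg hba, if_neg (by exact fun hc => hba hc.2), add_zero, one_smul]

lemma extract
    (hD2 : ∀ (i j : Fin n) (α β : Fin p),
      Dp i α * LinearMap.mulLeft ℂ (θc n p j β)
          - (if α = β then (-1 : ℂ) else 1) • (LinearMap.mulLeft ℂ (θc n p j β) * Dp i α)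
        = if i = j ∧ α = β then 1 else 0)
    (i : Fin n) :
    ∀ (l : List (Fin p)), l.Nodup → ∀ X : Lam n p, (∀ β, Dp i β X = 0) →
      ((l.map (Dp i)).prod) (((l.map (θc n p i)).prod) * X) = X := by
  intro l
  induction l with
  | nil => intro _ X _; simp
  | cons a l ih =>
    intro hnd X hX
    have ha : a ∉ l := (List.nodup_cons.1 hnd).1
    rw [List.map_cons, List.prod_cons, List.map_cons, List.prod_cons, mul_assoc,
      Module.End.mul_apply, commF hD2 i a l ha, ih (List.nodup_cons.1 hnd).2 X hX,
      D_mul hD2, if_pos rfl, if_pos ⟨rfl, rfl⟩, hX, mul_zero, smul_zero, zero_add]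

lemma main_chain
    (hD1 : ∀ (i : Fin n) (α : Fin p), Dp i α (1 : Lam n p) = 0)
    (hD2 : ∀ (i j : Fin n) (α β : Fin p),
      Dp i α * LinearMap.mulLeft ℂ (θc n p j β)
          - (if α = β then (-1 : ℂ) else 1) • (LinearMap.mulLeft ℂ (θc n p j β) * Dp i α)
        = if i = j ∧ α = β then 1 else 0) :
    ∀ (I : List (Fin n)), I.Nodup →
      ((I.reverse.map (fun i => ((List.finRange p).map (Dp i)).prod)).prod)
        ((I.map (fun i => ((List.finRange p).map (θc n p i)).prod)).prod) = 1 := by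
  intro I
  induction I with
  | nil => simp
  | cons i I ih =>
    intro hnd
    rw [List.reverse_cons, List.map_append, List.prod_append, List.map_cons, List.prod_cons,
      List.map_cons, List.prod_cons, List.map_nil, List.prod_nil, mul_one, Module.End.mul_apply,
      extract hD2 i (List.finRange p) (List.nodup_finRange p) _
        (fun β => kill_Theta hD1 hD2 I i β (List.nodup_cons.1 hnd).1),
      ih (List.nodup_cons.1 hnd).2]

end WithD

lemma smul_ofFn_prod {A : Type*} [Ring A] [Algebra ℂ A] :
    ∀ (m : ℕ) (f : Fin m → A) (c : ℂ),
      (List.ofFn (fun i => c • f i)).prod = c ^ m • (List.ofFn f).prod := by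
  intro m
  induction m with
  | zero => intro f c; simp
  | succ m ih =>
    intro f c
    rw [List.ofFn_succ, List.ofFn_succ, List.prod_cons, List.prod_cons, ih,
      smul_mul_assoc, mul_smul_comm, smul_smul, ← pow_succ']

lemma ofFn_rev_eq {A : Type*} {m : ℕ} (g : Fin m → A) :
    List.ofFn (fun t : Fin m => g t.rev) = (List.ofFn g).reverse := by
  apply List.ext_getElem
  · simp
  · intro k h1 h2
    simp only [List.getElem_ofFn, List.getElem_reverse, List.length_ofFn] at *
    congr 1
    apply Fin.ext
    simp [Fin.val_rev]
    omega
lemma smul_ofFn_prod_lam (n p : ℕ) (m : ℕ) (f : Fin m → Lam n p) (c : ℂ) :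
    (List.ofFn (fun i => c • f i)).prod = c ^ m • (List.ofFn f).prod :=
  smul_ofFn_prod m f c

lemma lam_smul_smul (n p : ℕ) (a b : ℂ) (x : Lam n p) : a • b • x = (a * b) • x :=
  smul_smul a b x

/-- `Δ_n^p ∘ ⋯ ∘ Δ_1^p (θ_1^p·θ_2^p⋯θ_n^p) = (p!)^{2n} · 1` in `Λ_n(p)`. -/
theorem stmt_15 (n p : ℕ) (hn : 0 < n) (hp : 0 < p)
    (Dp : Fin n → Fin p → Module.End ℂ (Lam n p))
    (hD1 : ∀ (i : Fin n) (α : Fin p), Dp i α (1 : Lam n p) = 0)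
    (hD2 : ∀ (i j : Fin n) (α β : Fin p),
      Dp i α * LinearMap.mulLeft ℂ (θc n p j β)
          - (if α = β then (-1 : ℂ) else 1) • (LinearMap.mulLeft ℂ (θc n p j β) * Dp i α)
        = if i = j ∧ α = β then 1 else 0)
    (hD3 : ∀ (i j : Fin n) (α β : Fin p),
      Dp i α * Dp j β = (if α = β then (-1 : ℂ) else 1) • (Dp j β * Dp i α))
    :
    (List.ofFn fun t : Fin n => Δop n p Dp t.rev ^ p).prod
        ((List.ofFn fun i : Fin n => θv n p i ^ p).prod)
      = ((p.factorial : ℂ) ^ (2 * n)) • (1 : Lam n p) := by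
  have hθp : ∀ i : Fin n, θv n p i ^ p
      = ((p.factorial : ℂ)) • ((List.finRange p).map (θc n p i)).prod := by
    intro i
    have h := aux_sum_pow (θc n p i) (θc_comm n p i) (θc_sq n p i) (List.finRange p)
    rw [List.length_finRange] at h
    rw [θv, Fin.sum_univ_def, Nat.cast_smul_eq_nsmul]
    exact h
  have hDsq : ∀ (i : Fin n) (a : Fin p), Dp i a * Dp i a = 0 := by
    intro i a
    refine half_smul (Dp i a * Dp i a) ?_
    have h := hD3 i i a a
    rw [if_pos rfl] at h
    have h2 : (-1 : ℂ) • (Dp i a * Dp i a) = -(Dp i a * Dp i a) :=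
      neg_one_smul ℂ (Dp i a * Dp i a)
    exact h.trans h2
  have hDcomm : ∀ (i : Fin n) (a b : Fin p), Commute (Dp i a) (Dp i b) := by
    intro i a b
    rcases eq_or_ne a b with rfl | hab
    · exact Commute.refl _
    · have h := hD3 i i a b
      rw [if_neg hab, one_smul] at h
      exact h
  have hΔp : ∀ i : Fin n, Δop n p Dp i ^ p
      = ((p.factorial : ℂ)) • ((List.finRange p).map (Dp i)).prod := by
    intro i
    have h := aux_sum_pow (Dp i) (hDcomm i) (hDsq i) (List.finRange p)
    rw [List.length_finRange] at h
    rw [Δop, Fin.sum_univ_def, Nat.cast_smul_eq_nsmul]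
    exact h
  have hmain : (List.ofFn fun t : Fin n => ((List.finRange p).map (Dp t.rev)).prod).prod
      ((List.ofFn fun i : Fin n => ((List.finRange p).map (θc n p i)).prod).prod) = 1 := by
    have e1 : (List.ofFn fun t : Fin n => ((List.finRange p).map (Dp t.rev)).prod)
        = (List.finRange n).reverse.map
            (fun i => ((List.finRange p).map (Dp i)).prod) := by
      rw [ofFn_rev_eq (fun i => ((List.finRange p).map (Dp i)).prod), List.ofFn_eq_map,
        List.map_reverse]
    have e2 : (List.ofFn fun i : Fin n => ((List.finRange p).map (θc n p i)).prod)
        = (List.finRange n).map (fun i => ((List.finRange p).map (θc n p i)).prod) :=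
      List.ofFn_eq_map
    rw [e1, e2]
    exact main_chain hD1 hD2 (List.finRange n) (List.nodup_finRange n)
  simp only [hθp, hΔp]
  rw [smul_ofFn_prod (A := Module.End ℂ (Lam n p)), smul_ofFn_prod_lam, LinearMap.smul_apply, map_smul, hmain,
    lam_smul_smul, ← pow_add, two_mul]
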